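/- Let (Ω, F, P) be a complete probability space, C : Ω ⇒ ℝⁿ a measurable set-valued map with nonempty closed convex values, 𝒞 = { x ∈ L²(Ω,F,ℝⁿ) : x(ω) ∈ C(ω) a.s. }, and x ∈ 𝒞. Then the normal cone of 𝒞 at x in L²(Ω,F,ℝⁿ) is N_𝒞(x) = { ξ ∈ L²(Ω,F,ℝⁿ) : ξ(ω) ∈ N_{C(ω)}(x(ω)) a.s. }. -/

import Mathlib

open MeasureTheory RealInnerProductSpace Metric EMetric Set ENNReal NNReal

section Aux
variable {Ω : Type*} {n : ℕ} {mF : MeasurableSpace Ω}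
local notation "E" => EuclideanSpace ℝ (Fin n)



/-- Measurability of `ω ↦ infEdist q (C ω)` for a fixed point `q`. -/
lemma meas_infEdist_fixed (C : Ω → Set E)
    (hCmeas : ∀ A : Set E, IsOpen A → MeasurableSet {ω | (C ω ∩ A).Nonempty}) (q : E) :
    Measurable (fun ω => Metric.infEDist q (C ω)) := by
  apply measurable_of_Iio
  intro r
  have : (fun ω => Metric.infEDist q (C ω)) ⁻¹' (Set.Iio r)
      = {ω | (C ω ∩ Metric.eball q r).Nonempty} := by
    ext ω
    simp only [Set.mem_preimage, Set.mem_Iio, Set.mem_setOf_eq, Metric.infEDist_lt_iff,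
      Set.Nonempty]
    constructor
    · rintro ⟨y, hy, hlt⟩; exact ⟨y, hy, by simpa [Metric.mem_eball, edist_comm] using hlt⟩
    · rintro ⟨y, hy, hlt⟩; exact ⟨y, hy, by simpa [Metric.mem_eball, edist_comm] using hlt⟩
  rw [this]
  exact hCmeas _ Metric.isOpen_eball

/-- Hitting a compact set is a measurable event. -/
lemma meas_hit_compact (C : Ω → Set E)
    (hCmeas : ∀ A : Set E, IsOpen A → MeasurableSet {ω | (C ω ∩ A).Nonempty})
    (hCclosed : ∀ ω, IsClosed (C ω)) {K : Set E} (hK : IsCompact K) :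
    MeasurableSet {ω | (C ω ∩ K).Nonempty} := by
  rcases K.eq_empty_or_nonempty with rfl | hKne
  · simp
  haveI : Nonempty K := hKne.to_subtype
  set u : ℕ → K := TopologicalSpace.denseSeq K with hu
  have hdense : DenseRange u := TopologicalSpace.denseRange_denseSeq K
  have hset : {ω | (C ω ∩ K).Nonempty} =
      ⋂ (m : ℕ), ⋃ (j : ℕ),
        {ω | Metric.infEDist (u j : E) (C ω) < ENNReal.ofReal (1 / (m + 1))} := by
    ext ω
    simp only [Set.mem_setOf_eq, Set.mem_iInter, Set.mem_iUnion]
    constructor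
    · rintro ⟨z, hzC, hzK⟩ m
      have hpos : (0:ℝ) < 1 / (m + 1) := by positivity
      obtain ⟨j, hj⟩ := Metric.denseRange_iff.1 hdense ⟨z, hzK⟩ _ hpos
      refine ⟨j, lt_of_le_of_lt (Metric.infEDist_le_edist_of_mem hzC) ?_⟩
      rw [edist_comm, edist_lt_ofReal]
      simpa [Subtype.dist_eq, dist_comm] using hj
    · intro hmem
      choose j hj using hmem
      have hz : ∀ m : ℕ, ∃ z ∈ C ω, edist (u (j m) : E) z < ENNReal.ofReal (1 / (m + 1)) :=
        fun m => Metric.infEDist_lt_iff.1 (hj m)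
      choose z hzC hzd using hz
      obtain ⟨a, haK, φ, hφ, hqa⟩ := hK.tendsto_subseq (fun m => (u (j m)).2)
      have hza : Filter.Tendsto (fun m => z (φ m)) Filter.atTop (nhds a) := by
        rw [tendsto_iff_dist_tendsto_zero]
        apply squeeze_zero (fun m => dist_nonneg)
          (g := fun m => 1 / (m + 1) + dist ((u (j (φ m))) : E) a)
        · intro m
          have h1 : dist (z (φ m)) ((u (j (φ m))) : E) < 1 / (φ m + 1) := by
            have := hzd (φ m); rw [edist_lt_ofReal] at this; linarith [dist_comm (z (φ m)) ((u (j (φ m))) : E) ▸ this]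
          have h2 : (1:ℝ) / (φ m + 1) ≤ 1 / (m + 1) := by
            apply one_div_le_one_div_of_le (by positivity)
            have h : m ≤ φ m := hφ.le_apply
            have h' : (m:ℝ) ≤ (φ m : ℝ) := by exact_mod_cast h
            linarith
          calc dist (z (φ m)) a ≤ dist (z (φ m)) ((u (j (φ m))) : E) + dist ((u (j (φ m))) : E) a :=
                dist_triangle _ _ _
            _ ≤ 1 / (m + 1) + dist ((u (j (φ m))) : E) a := by linarith
        · have l1 : Filter.Tendsto (fun m : ℕ => (1:ℝ) / (m + 1)) Filter.atTop (nhds 0) :=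
            tendsto_one_div_add_atTop_nhds_zero_nat
          have l2 : Filter.Tendsto (fun m => dist ((u (j (φ m))) : E) a) Filter.atTop (nhds 0) := by
            rw [← tendsto_iff_dist_tendsto_zero]
            exact hqa
          simpa using l1.add l2
      have haC : a ∈ C ω :=
        (hCclosed ω).mem_of_tendsto hza (Filter.Eventually.of_forall fun m => hzC (φ m))
      exact ⟨a, haC, haK⟩
  rw [hset]
  exact MeasurableSet.iInter fun m => MeasurableSet.iUnion fun jj =>
    (meas_infEdist_fixed C hCmeas _) measurableSet_Iio

/-- Measurability of `ω ↦ infEdist q (C ω ∩ F)` for fixed `q` and closed `F`. -/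
lemma meas_infEdist_inter_closed (C : Ω → Set E)
    (hCmeas : ∀ A : Set E, IsOpen A → MeasurableSet {ω | (C ω ∩ A).Nonempty})
    (hCclosed : ∀ ω, IsClosed (C ω)) {F : Set E} (hF : IsClosed F) (q : E) :
    Measurable (fun ω => Metric.infEDist q (C ω ∩ F)) := by
  apply measurable_of_Iio
  intro r
  have hset : (fun ω => Metric.infEDist q (C ω ∩ F)) ⁻¹' (Set.Iio r)
      = ⋃ (r' : ℚ) (_ : ENNReal.ofReal (r' : ℝ) < r),
          {ω | (C ω ∩ (F ∩ Metric.closedBall q (r' : ℝ))).Nonempty} := by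
    ext ω
    simp only [Set.mem_preimage, Set.mem_Iio, Set.mem_iUnion, Set.mem_setOf_eq]
    constructor
    · intro hlt
      obtain ⟨zz, hz, hzlt⟩ := Metric.infEDist_lt_iff.1 hlt
      have : ∃ r' : ℚ, dist q zz ≤ (r' : ℝ) ∧ ENNReal.ofReal (r' : ℝ) < r := by
        rcases eq_or_ne r ⊤ with rfl | hr
        · obtain ⟨r', hr'⟩ := exists_rat_gt (dist q zz)
          exact ⟨r', hr'.le, ENNReal.ofReal_lt_top⟩
        · have hd : dist q zz < r.toReal := by
            rw [← ENNReal.ofReal_lt_iff_lt_toReal dist_nonneg hr, ← edist_dist]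
            exact hzlt
          obtain ⟨r', h1, h2⟩ := exists_rat_btwn hd
          refine ⟨r', h1.le, ?_⟩
          rw [← ENNReal.ofReal_toReal hr]
          exact ENNReal.ofReal_lt_ofReal_iff_of_nonneg (dist_nonneg.trans h1.le) |>.2 h2
      obtain ⟨r', h1, h2⟩ := this
      exact ⟨r', h2, zz, hz.1, hz.2, by simpa [Metric.mem_closedBall, dist_comm] using h1⟩
    · rintro ⟨r', hr', zz, hzC, hzF, hzB⟩
      refine lt_of_le_of_lt (Metric.infEDist_le_edist_of_mem ⟨hzC, hzF⟩) ?_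
      refine lt_of_le_of_lt ?_ hr'
      rw [edist_dist]
      exact ENNReal.ofReal_le_ofReal (by simpa [Metric.mem_closedBall, dist_comm] using hzB)
  rw [hset]
  exact MeasurableSet.iUnion fun r' => MeasurableSet.iUnion fun _ =>
    meas_hit_compact C hCmeas hCclosed ((isCompact_closedBall q _).inter_left hF)

/-- Substituting a measurable function into a measurably-varying `infEdist`. -/
lemma meas_infEdist_comp {S : Ω → Set E}
    (hS : ∀ q : E, Measurable (fun ω => Metric.infEDist q (S ω)))
    {g : Ω → E} (hg : Measurable g) :
    Measurable (fun ω => Metric.infEDist (g ω) (S ω)) := by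
  obtain ⟨D, Dc, Dd⟩ := TopologicalSpace.exists_countable_dense E
  haveI : Nonempty D := (Dd.nonempty).to_subtype
  haveI : Countable D := Dc.to_subtype
  have key : ∀ ω, Metric.infEDist (g ω) (S ω)
      = ⨅ q : D, (edist (g ω) (q : E) + Metric.infEDist (q : E) (S ω)) := by
    intro ω
    apply le_antisymm
    · exact le_iInf fun q => by
        calc Metric.infEDist (g ω) (S ω)
            ≤ Metric.infEDist (q : E) (S ω) + edist (g ω) (q : E) :=
              Metric.infEDist_le_infEDist_add_edist
          _ = edist (g ω) (q : E) + Metric.infEDist (q : E) (S ω) := add_comm _ _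
    · apply ENNReal.le_of_forall_pos_le_add
      intro ε hε hfin
      have hε2 : (0:ℝ≥0∞) < (ε : ℝ≥0∞) / 2 := by
        simp [ENNReal.div_pos_iff, hε.ne']
      obtain ⟨q, hqD, hq⟩ := EMetric.mem_closure_iff.1 (Dd (g ω)) _ hε2
      calc ⨅ q : D, (edist (g ω) (q : E) + Metric.infEDist (q : E) (S ω))
          ≤ edist (g ω) q + Metric.infEDist q (S ω) := iInf_le _ (⟨q, hqD⟩ : D)
        _ ≤ edist (g ω) q + (Metric.infEDist (g ω) (S ω) + edist q (g ω)) :=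
            add_le_add le_rfl Metric.infEDist_le_infEDist_add_edist
        _ = Metric.infEDist (g ω) (S ω) + (edist (g ω) q + edist q (g ω)) := by ring
        _ ≤ Metric.infEDist (g ω) (S ω) + ((ε : ℝ≥0∞) / 2 + (ε : ℝ≥0∞) / 2) := by
            rw [edist_comm q (g ω)]
            gcongr
        _ = Metric.infEDist (g ω) (S ω) + (ε : ℝ≥0∞) := by rw [ENNReal.add_halves]
  have : (fun ω => Metric.infEDist (g ω) (S ω))
      = fun ω => ⨅ q : D, (edist (g ω) (q : E) + Metric.infEDist (q : E) (S ω)) := funext key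
  rw [this]
  exact Measurable.iInf fun q => ((hg.edist measurable_const).add (hS (q : E)))

/-- A point satisfying the variational inequality minimizes the distance. -/
lemma var_dist_le {K : Set E} {u v : E} (hvar : ∀ w ∈ K, ⟪u - v, w - v⟫ ≤ 0) :
    ∀ w ∈ K, dist u v ≤ dist u w := by
  intro w hw
  have expand : ‖u - w‖ ^ 2 = ‖u - v‖ ^ 2 + 2 * ⟪u - v, v - w⟫ + ‖v - w‖ ^ 2 := by
    have : u - w = (u - v) + (v - w) := by abel
    rw [this, norm_add_sq_real]
  have h1 : (0:ℝ) ≤ ⟪u - v, v - w⟫ := by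
    have := hvar w hw
    have : ⟪u - v, v - w⟫ = -⟪u - v, w - v⟫ := by
      rw [← inner_neg_right]; congr 1; abel
    linarith [hvar w hw, this ▸ neg_nonneg.2 (hvar w hw)]
  have h2 : ‖u - v‖ ^ 2 ≤ ‖u - w‖ ^ 2 := by nlinarith [sq_nonneg ‖v - w‖]
  rw [dist_eq_norm, dist_eq_norm]
  exact le_of_pow_le_pow_left₀ two_ne_zero (norm_nonneg _) h2

/-- Uniqueness of the point satisfying the variational inequality. -/
lemma var_unique {K : Set E} {u v₁ v₂ : E} (h1 : v₁ ∈ K) (h2 : v₂ ∈ K)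
    (hv1 : ∀ w ∈ K, ⟪u - v₁, w - v₁⟫ ≤ 0) (hv2 : ∀ w ∈ K, ⟪u - v₂, w - v₂⟫ ≤ 0) :
    v₁ = v₂ := by
  have a1 := hv1 v₂ h2
  have a2 := hv2 v₁ h1
  have key : ‖v₂ - v₁‖ ^ 2 ≤ 0 := by
    have : ⟪(u - v₁) - (u - v₂), v₂ - v₁⟫ ≤ 0 := by
      rw [inner_sub_left]
      have : ⟪u - v₂, v₂ - v₁⟫ = -⟪u - v₂, v₁ - v₂⟫ := by
        rw [← inner_neg_right]; congr 1; abel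
      linarith [this ▸ neg_nonneg.2 a2]
    have heq : (u - v₁) - (u - v₂) = v₂ - v₁ := by abel
    rw [heq, real_inner_self_eq_norm_sq] at this
    exact this
  have : ‖v₂ - v₁‖ = 0 := by nlinarith [norm_nonneg (v₂ - v₁)]
  rw [norm_eq_zero, sub_eq_zero] at this
  exact this.symm

/-- The projection (characterized by the variational inequality) lies in an open set `U`
iff the infEdist over `K ∩ Uᶜ` strictly exceeds that over `K`. -/
lemma proj_mem_open_iff {K : Set E} (hK : IsClosed K) (hKconv : Convex ℝ K)
    {u v : E} (hv : v ∈ K) (hvar : ∀ w ∈ K, ⟪u - v, w - v⟫ ≤ 0)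
    {U : Set E} (hU : IsOpen U) :
    v ∈ U ↔ Metric.infEDist u K < Metric.infEDist u (K ∩ Uᶜ) := by
  have hdmin : ∀ w ∈ K, dist u v ≤ dist u w := var_dist_le hvar
  have hattain : edist u v = Metric.infEDist u K := by
    apply le_antisymm
    · exact Metric.le_infEDist.2 fun w hw => by
        rw [edist_dist, edist_dist]
        exact ENNReal.ofReal_le_ofReal (hdmin w hw)
    · exact Metric.infEDist_le_edist_of_mem hv
  constructor
  · intro hvU
    by_contra hc
    push_neg at hc
    -- hc : infEdist u (K ∩ Uᶜ) ≤ infEdist u K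
    have hfin : Metric.infEDist u K ≠ ⊤ := by
      rw [← hattain]; exact edist_ne_top _ _
    have hfin' : Metric.infEDist u (K ∩ Uᶜ) ≠ ⊤ := fun h => hfin (top_le_iff.1 (h ▸ hc))
    have hne : (K ∩ Uᶜ).Nonempty := by
      by_contra h
      rw [Set.not_nonempty_iff_eq_empty.1 h, Metric.infEDist_empty] at hfin'
      exact hfin' rfl
    obtain ⟨z, hz, hzd⟩ := ((hK.inter hU.isClosed_compl).exists_infDist_eq_dist hne u)
    -- dist u z = infDist u (K ∩ Uᶜ) ≤ infDist u K = dist u v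
    have hle : dist u z ≤ dist u v := by
      rw [← hzd]
      have : Metric.infDist u (K ∩ Uᶜ) ≤ Metric.infDist u K :=
        ENNReal.toReal_mono hfin hc
      calc Metric.infDist u (K ∩ Uᶜ) ≤ Metric.infDist u K := this
        _ ≤ dist u v := by
            rw [Metric.infDist, ← hattain, edist_dist, ENNReal.toReal_ofReal dist_nonneg]
    have hge : dist u v ≤ dist u z := hdmin z hz.1
    have heq : dist u z = dist u v := le_antisymm hle hge
    -- z also satisfies the variational inequality
    have hzmin : ∀ w ∈ K, dist u z ≤ dist u w := fun w hw => heq ▸ (hdmin w hw)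
    have hziInf : ‖u - z‖ = ⨅ w : K, ‖u - (w:E)‖ := by
      have hKne : K.Nonempty := ⟨v, hv⟩
      haveI : Nonempty K := hKne.to_subtype
      apply le_antisymm
      · apply le_ciInf
        intro w
        rw [← dist_eq_norm, ← dist_eq_norm]
        exact hzmin w w.2
      · have : (⨅ w : K, ‖u - (w:E)‖) ≤ ‖u - z‖ := by
          have := ciInf_le (f := fun w : K => ‖u - (w:E)‖) ⟨0, fun b hb => by
            obtain ⟨w, rfl⟩ := hb; exact norm_nonneg _⟩ (⟨v, hv⟩ : K)
          calc (⨅ w : K, ‖u - (w:E)‖) ≤ ‖u - v‖ := this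
            _ = ‖u - z‖ := by rw [← dist_eq_norm, ← dist_eq_norm, heq.symm]
        exact this
    have hzvar : ∀ w ∈ K, ⟪u - z, w - z⟫ ≤ 0 :=
      (norm_eq_iInf_iff_real_inner_le_zero hKconv hz.1).1 hziInf
    have : z = v := var_unique hz.1 hv hzvar hvar
    exact hz.2 (this ▸ hvU)
  · intro hlt
    by_contra hvU
    have : Metric.infEDist u (K ∩ Uᶜ) ≤ edist u v :=
      Metric.infEDist_le_edist_of_mem ⟨hv, hvU⟩
    rw [hattain] at this
    exact absurd (lt_of_lt_of_le hlt this) (lt_irrefl _)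


end Aux

section Helpers
variable {Ω : Type*} {mF : MeasurableSpace Ω} {μ : Measure Ω}

lemma integrable_inner_two {f g : Ω → EuclideanSpace ℝ (Fin n)}
    (hf : MemLp f 2 μ) (hg : MemLp g 2 μ) :
    Integrable (fun ω => ⟪f ω, g ω⟫) μ := by
  have h := MeasureTheory.L2.integrable_inner (𝕜 := ℝ) (hf.toLp f) (hg.toLp g)
  apply h.congr
  filter_upwards [hf.coeFn_toLp, hg.coeFn_toLp] with ω h1 h2
  rw [h1, h2]

end Helpers

/-- The normal cone in `ℝⁿ` of a closed convex set `S` at `x`. -/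
def normalConeFin {n : ℕ} (S : Set (EuclideanSpace ℝ (Fin n)))
    (x : EuclideanSpace ℝ (Fin n)) : Set (EuclideanSpace ℝ (Fin n)) :=
  {v | x ∈ S ∧ ∀ y ∈ S, ⟪v, y - x⟫ ≤ 0}

/-- The normal cone at `x` of the set `𝒞` of `L²`-selections of a measurable set-valued
map `C` with nonempty closed convex values consists exactly of the square-integrable
random vectors `ξ` with `ξ(ω) ∈ N_{C(ω)}(x(ω))` a.s. -/
theorem normalCone_of_L2_selections
    {Ω : Type*} {n : ℕ} {mF : MeasurableSpace Ω} {μ : Measure Ω} [IsProbabilityMeasure μ]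
    [μ.IsComplete]
    (C : Ω → Set (EuclideanSpace ℝ (Fin n)))
    (hCmeas : ∀ A : Set (EuclideanSpace ℝ (Fin n)), IsOpen A →
      MeasurableSet {ω | (C ω ∩ A).Nonempty})
    (hCne : ∀ ω, (C ω).Nonempty) (hCclosed : ∀ ω, IsClosed (C ω))
    (hCconv : ∀ ω, Convex ℝ (C ω))
    (x : Ω → EuclideanSpace ℝ (Fin n)) (hx : MemLp x 2 μ)
    (hxC : ∀ᵐ ω ∂μ, x ω ∈ C ω) :
    {ξ : Ω → EuclideanSpace ℝ (Fin n) | MemLp ξ 2 μ ∧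
        ∀ y : Ω → EuclideanSpace ℝ (Fin n), MemLp y 2 μ → (∀ᵐ ω ∂μ, y ω ∈ C ω) →
          ∫ ω, ⟪ξ ω, y ω - x ω⟫ ∂μ ≤ 0} =
      {ξ : Ω → EuclideanSpace ℝ (Fin n) | MemLp ξ 2 μ ∧
        ∀ᵐ ω ∂μ, ξ ω ∈ normalConeFin (C ω) (x ω)} := by
  ext ξ
  simp only [Set.mem_setOf_eq]
  constructor
  · rintro ⟨hξ2, hmin⟩
    refine ⟨hξ2, ?_⟩
    -- measurable representatives
    set x' : Ω → EuclideanSpace ℝ (Fin n) := hx.1.mk x with hx'def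
    set ξ' : Ω → EuclideanSpace ℝ (Fin n) := hξ2.1.mk ξ with hξ'def
    have hx'm : Measurable x' := hx.1.stronglyMeasurable_mk.measurable
    have hξ'm : Measurable ξ' := hξ2.1.stronglyMeasurable_mk.measurable
    have hx'2 : MemLp x' 2 μ := hx.ae_eq hx.1.ae_eq_mk
    have hξ'2 : MemLp ξ' 2 μ := hξ2.ae_eq hξ2.1.ae_eq_mk
    set g : Ω → EuclideanSpace ℝ (Fin n) := fun ω => x' ω + ξ' ω with hgdef
    have hgm : Measurable g := hx'm.add hξ'm
    -- the pointwise metric projection of g ω onto C ω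
    have hproj : ∀ ω, ∃ v, v ∈ C ω ∧ ∀ w ∈ C ω, ⟪g ω - v, w - v⟫ ≤ 0 := by
      intro ω
      obtain ⟨v, hv, hmin'⟩ := exists_norm_eq_iInf_of_complete_convex (hCne ω)
        ((hCclosed ω).isComplete) (hCconv ω) (g ω)
      exact ⟨v, hv, (norm_eq_iInf_iff_real_inner_le_zero (hCconv ω) hv).1 hmin'⟩
    choose p hpC hpvar using hproj
    have hpmeas : Measurable p := by
      apply measurable_of_isOpen
      intro U hU
      have hpre : p ⁻¹' U =
          {ω | Metric.infEDist (g ω) (C ω) < Metric.infEDist (g ω) (C ω ∩ Uᶜ)} := by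
        ext ω
        exact proj_mem_open_iff (hCclosed ω) (hCconv ω) (hpC ω) (hpvar ω) hU
      rw [hpre]
      exact measurableSet_lt
        (meas_infEdist_comp (fun q => meas_infEdist_fixed C hCmeas q) hgm)
        (meas_infEdist_comp
          (fun q => meas_infEdist_inter_closed C hCmeas hCclosed hU.isClosed_compl q) hgm)
    -- the good event
    have hgood : ∀ᵐ ω ∂μ, x ω ∈ C ω ∧ x' ω = x ω ∧ ξ' ω = ξ ω := by
      filter_upwards [hxC, hx.1.ae_eq_mk, hξ2.1.ae_eq_mk] with ω h1 h2 h3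
      exact ⟨h1, h2.symm, h3.symm⟩
    -- the norm bound giving MemLp of p
    have hbound : ∀ᵐ ω ∂μ, ‖p ω - x' ω‖ ≤ ‖ξ' ω‖ := by
      filter_upwards [hgood] with ω ⟨hxCω, hx'ω, hξ'ω⟩
      have hx'C : x' ω ∈ C ω := hx'ω ▸ hxCω
      have hv := hpvar ω (x' ω) hx'C
      have hsplit : p ω - x' ω = (p ω - g ω) + (g ω - x' ω) := by abel
      have e1 : ⟪p ω - g ω, p ω - x' ω⟫ ≤ 0 := by
        have : ⟪p ω - g ω, p ω - x' ω⟫ = ⟪g ω - p ω, x' ω - p ω⟫ := by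
          rw [show p ω - g ω = -(g ω - p ω) by abel, show p ω - x' ω = -(x' ω - p ω) by abel,
            inner_neg_neg]
        rw [this]; exact hv
      have e2 : ⟪g ω - x' ω, p ω - x' ω⟫ ≤ ‖ξ' ω‖ * ‖p ω - x' ω‖ := by
        have hgx : g ω - x' ω = ξ' ω := by simp [hgdef]
        rw [hgx]
        exact real_inner_le_norm _ _
      have hsum : ‖p ω - x' ω‖ ^ 2 ≤ ‖ξ' ω‖ * ‖p ω - x' ω‖ := by
        have : ⟪p ω - x' ω, p ω - x' ω⟫ =
            ⟪p ω - g ω, p ω - x' ω⟫ + ⟪g ω - x' ω, p ω - x' ω⟫ := by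
          rw [← inner_add_left, ← hsplit]
        rw [← real_inner_self_eq_norm_sq]
        linarith
      nlinarith [norm_nonneg (p ω - x' ω), norm_nonneg (ξ' ω)]
    have hpsub : MemLp (fun ω => p ω - x' ω) 2 μ := by
      refine MemLp.of_le hξ'2 ((hpmeas.sub hx'm).stronglyMeasurable.aestronglyMeasurable) ?_
      filter_upwards [hbound] with ω hb
      simpa using hb
    have hpMem : MemLp p 2 μ := by
      have := hpsub.add hx'2
      have heq : ((fun ω => p ω - x' ω) + x') = p := by
        funext ω; simp only [Pi.add_apply]; abel
      rwa [heq] at this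
    have hkey := hmin p hpMem (Filter.Eventually.of_forall hpC)
    have hh2 : MemLp (fun ω => p ω - x ω) 2 μ := hpMem.sub hx
    have hint1 : Integrable (fun ω => ‖p ω - x ω‖ ^ 2) μ := by
      have := integrable_inner_two hh2 hh2
      apply this.congr
      filter_upwards with ω
      rw [real_inner_self_eq_norm_sq]
    have hint2 : Integrable (fun ω => ⟪ξ ω, p ω - x ω⟫) μ := integrable_inner_two hξ2 hh2
    have hptwise : ∀ᵐ ω ∂μ, ‖p ω - x ω‖ ^ 2 ≤ ⟪ξ ω, p ω - x ω⟫ := by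
      filter_upwards [hgood] with ω ⟨hxCω, hx'ω, hξ'ω⟩
      have hv := hpvar ω (x ω) hxCω
      have hsplit : ξ ω = (g ω - p ω) + (p ω - x ω) := by
        rw [hgdef]; simp only [hx'ω, hξ'ω]; abel
      have e1 : 0 ≤ ⟪g ω - p ω, p ω - x ω⟫ := by
        have : ⟪g ω - p ω, p ω - x ω⟫ = -⟪g ω - p ω, x ω - p ω⟫ := by
          rw [show p ω - x ω = -(x ω - p ω) by abel, inner_neg_right]
        rw [this]
        linarith
      have : ⟪ξ ω, p ω - x ω⟫ =
          ⟪g ω - p ω, p ω - x ω⟫ + ⟪p ω - x ω, p ω - x ω⟫ := by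
        rw [← inner_add_left, ← hsplit]
      rw [this, real_inner_self_eq_norm_sq] at *
      linarith
    have hle : ∫ ω, ‖p ω - x ω‖ ^ 2 ∂μ ≤ 0 :=
      le_trans (integral_mono_ae hint1 hint2 hptwise) hkey
    have hzero : ∫ ω, ‖p ω - x ω‖ ^ 2 ∂μ = 0 :=
      le_antisymm hle (integral_nonneg fun ω => sq_nonneg _)
    have hae0 : (fun ω => ‖p ω - x ω‖ ^ 2) =ᵐ[μ] 0 :=
      (integral_eq_zero_iff_of_nonneg_ae
        (Filter.Eventually.of_forall fun ω => sq_nonneg _) hint1).1 hzero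
    filter_upwards [hgood, hae0] with ω hg0 hzω
    obtain ⟨hxCω, hx'ω, hξ'ω⟩ := hg0
    have hpx : p ω = x ω := by
      have : ‖p ω - x ω‖ ^ 2 = 0 := hzω
      have : ‖p ω - x ω‖ = 0 := by
        have := pow_eq_zero_iff (n := 2) (by norm_num) |>.1 this
        exact this
      rwa [norm_eq_zero, sub_eq_zero] at this
    refine ⟨hxCω, fun w hw => ?_⟩
    have hv := hpvar ω w hw
    have hgp : g ω - p ω = ξ ω := by
      rw [hgdef]; simp only [hx'ω, hξ'ω, hpx]; abel
    rwa [hgp, hpx] at hv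
  · rintro ⟨hξ2, hN⟩
    refine ⟨hξ2, fun y hy hyC => ?_⟩
    apply integral_nonpos_of_ae
    filter_upwards [hN, hyC] with ω h1 h2
    exact h1.2 (y ω) h2
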